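/- Let p, q be coprime positive integers with q even, and b an integer such that q/2 and b have the same parity. Then |G(p,b,q)| = √(2q), where G(p,b,q) = ∑_{r=0}^{q-1} e^{2πi(p r² + b r)/q}. -/

import Mathlib

open Complex

noncomputable def G (p : ℕ) (b : ℤ) (q : ℕ) : ℂ :=
  ∑ r ∈ Finset.range q,
    Complex.exp (2 * Real.pi * Complex.I * ((p * r ^ 2 + b * r : ℂ) / q))

lemma conj_stdAddChar {q : ℕ} [NeZero q] (a : ZMod q) :
    (starRingEnd ℂ) (ZMod.stdAddChar a) = ZMod.stdAddChar (-a) := by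
  have h1 : ‖(ZMod.stdAddChar (N := q) a)‖ = 1 := by
    rw [ZMod.stdAddChar_apply]; exact Circle.norm_coe _
  rw [AddChar.map_neg_eq_inv, Complex.inv_def, Complex.normSq_eq_norm_sq, h1]
  simp

lemma sum_range_eq_sum_zmod {q : ℕ} [NeZero q] (F : ZMod q → ℂ) :
    ∑ r ∈ Finset.range q, F r = ∑ x : ZMod q, F x := by
  refine Finset.sum_nbij' (fun r => (r : ZMod q)) (fun x => x.val) ?_ ?_ ?_ ?_ ?_
  · intro a _; exact Finset.mem_univ _
  · intro x _; exact Finset.mem_range.mpr (ZMod.val_lt x)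
  · intro a ha; exact ZMod.val_cast_of_lt (Finset.mem_range.mp ha)
  · intro x _; exact ZMod.natCast_zmod_val x
  · intro a _; rfl

/-- If `p, q` are coprime positive integers, `q` is even, and `q/2` and `b` have
the same parity, then `|G(p,b,q)| = √(2q)`. -/
theorem abs_gauss_sum_even_same_parity (p q : ℕ) (b : ℤ) (hp : 0 < p) (hq : 0 < q)
    (hcop : Nat.Coprime p q) (heven : Even q) (hpar : Even ((q / 2 : ℤ) + b)) :
    ‖G p b q‖ = Real.sqrt (2 * q) := by
  haveI : NeZero q := ⟨hq.ne'⟩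
  set ψ : AddChar (ZMod q) ℂ := ZMod.stdAddChar with hψdef
  set m : ℕ := q / 2 with hmdef
  have hq2 : q = 2 * m := (Nat.two_mul_div_two_of_even heven).symm
  have hm0 : 0 < m := by omega
  -- Step 1: rewrite G as a sum over ZMod q
  have hG : G p b q = ∑ x : ZMod q, ψ ((p : ZMod q) * x ^ 2 + (b : ZMod q) * x) := by
    rw [← sum_range_eq_sum_zmod, G]
    refine Finset.sum_congr rfl fun r hr => ?_
    have : ((p : ZMod q) * (r : ZMod q) ^ 2 + (b : ZMod q) * (r : ZMod q)) =
        (((p : ℤ) * (r : ℤ) ^ 2 + b * r : ℤ) : ZMod q) := by push_cast; ring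
    rw [this, hψdef, ZMod.stdAddChar_coe]
    congr 1
    push_cast
    ring
  -- Step 2: compute G * conj G as a double sum
  have hmul : G p b q * (starRingEnd ℂ) (G p b q) =
      ∑ t : ZMod q, ∑ y : ZMod q,
        ψ ((p : ZMod q) * t ^ 2 + (b : ZMod q) * t) * ψ (y * (2 * (p : ZMod q) * t)) := by
    rw [hG, map_sum, Finset.sum_mul_sum, Finset.sum_comm]
    conv_rhs => rw [Finset.sum_comm]
    refine Finset.sum_congr rfl fun y _ => ?_
    simp_rw [hψdef, conj_stdAddChar]
    refine (Fintype.sum_equiv (Equiv.addLeft y) _ _ fun t => ?_).symm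
    rw [← AddChar.map_add_eq_mul, ← AddChar.map_add_eq_mul]
    congr 1
    simp only [Equiv.coe_addLeft]
    ring
  have hprim : (ZMod.stdAddChar (N := q)).IsPrimitive := ZMod.isPrimitive_stdAddChar q
  classical
  have hmul2 : G p b q * (starRingEnd ℂ) (G p b q) =
      ∑ t : ZMod q,
        ψ ((p : ZMod q) * t ^ 2 + (b : ZMod q) * t) *
          (if 2 * (p : ZMod q) * t = 0 then (q : ℂ) else 0) := by
    rw [hmul]
    refine Finset.sum_congr rfl fun t _ => ?_
    rw [← Finset.mul_sum, hψdef, AddChar.sum_mulShift _ hprim]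
    simp [ZMod.card]
  -- Step 3: solve 2 p t = 0
  have hpu : IsUnit (p : ZMod q) := (ZMod.unitOfCoprime p hcop).isUnit
  have hsol : ∀ t : ZMod q, (2 * (p : ZMod q) * t = 0) ↔ t = 0 ∨ t = (m : ZMod q) := by
    intro t
    constructor
    · intro h
      have h2 : (2 : ZMod q) * t = 0 := by
        have : (p : ZMod q) * (2 * t) = 0 := by rw [← h]; ring
        exact (hpu.mul_right_eq_zero).mp this
      have hv : ((2 * t.val : ℕ) : ZMod q) = 0 := by
        push_cast
        rw [ZMod.natCast_zmod_val]
        exact h2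
      have hdvd : q ∣ 2 * t.val := (ZMod.natCast_eq_zero_iff _ _).mp hv
      have hmdvd : m ∣ t.val := by
        rcases hdvd with ⟨c, hc⟩
        refine ⟨c, ?_⟩
        have h2 : 2 * t.val = 2 * (m * c) := by rw [hc, hq2]; ring
        omega
      rcases hmdvd with ⟨c, hc⟩
      have hvlt : t.val < q := ZMod.val_lt t
      have hc2 : c = 0 ∨ c = 1 := by
        rcases Nat.lt_or_ge c 2 with h' | h'
        · omega
        · exfalso; nlinarith
      rcases hc2 with rfl | rfl
      · left
        have : t.val = 0 := by omega
        rw [← ZMod.natCast_zmod_val t, this, Nat.cast_zero]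
      · right
        have : t.val = m := by omega
        rw [← ZMod.natCast_zmod_val t, this]
    · rintro (rfl | rfl)
      · rw [mul_zero]
      · have : (2 : ZMod q) * (m : ZMod q) = 0 := by
          have : ((2 * m : ℕ) : ZMod q) = 0 := by
            rw [← hq2, ZMod.natCast_self]
          push_cast at this
          exact this
        calc 2 * (p : ZMod q) * (m : ZMod q) = (p : ZMod q) * (2 * (m : ZMod q)) := by ring
        _ = 0 := by rw [this, mul_zero]
  -- Step 4: evaluate the sum
  have hM0 : ((m : ZMod q) : ZMod q) ≠ 0 := by
    rw [Ne, ZMod.natCast_eq_zero_iff]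
    intro hdvd
    have := Nat.le_of_dvd hm0 hdvd
    omega
  have hne : (0 : ZMod q) ≠ (m : ZMod q) := fun h => hM0 h.symm
  -- the value at t = m is 1
  have hpodd : ¬ (2 ∣ p) := by
    intro h2
    have : (2 : ℕ) ∣ Nat.gcd p q := Nat.dvd_gcd h2 ⟨m, hq2⟩
    rw [hcop] at this
    omega
  have hval : ψ ((p : ZMod q) * (m : ZMod q) ^ 2 + (b : ZMod q) * (m : ZMod q)) = 1 := by
    have harg : ((p : ZMod q) * (m : ZMod q) ^ 2 + (b : ZMod q) * (m : ZMod q)) =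
        (((p : ℤ) * (m : ℤ) ^ 2 + b * m : ℤ) : ZMod q) := by push_cast; ring
    have hqd : (q : ℤ) ∣ ((p : ℤ) * (m : ℤ) ^ 2 + b * m) := by
      obtain ⟨k, hk⟩ : Odd (p : ℤ) := by
        rcases Int.even_or_odd (p : ℤ) with he | ho
        · exfalso
          exact hpodd ((Int.even_coe_nat p).mp he).two_dvd
        · exact ho
      obtain ⟨c, hc⟩ := hpar
      have hqz : (q : ℤ) = 2 * m := by exact_mod_cast hq2
      have hmz : ((q : ℤ) / 2) = (m : ℤ) := by omega
      rw [hmz] at hc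
      refine ⟨k * m + c, ?_⟩
      rw [hqz]
      nlinarith [hk, hc]
    rw [harg, (ZMod.intCast_zmod_eq_zero_iff_dvd _ _).mpr hqd]
    exact AddChar.map_zero_eq_one ψ
  have hsum : G p b q * (starRingEnd ℂ) (G p b q) = 2 * q := by
    rw [hmul2]
    have hfilter : ∀ t : ZMod q,
        ψ ((p : ZMod q) * t ^ 2 + (b : ZMod q) * t) *
          (if 2 * (p : ZMod q) * t = 0 then (q : ℂ) else 0) =
        (if t ∈ ({0, (m : ZMod q)} : Finset (ZMod q)) then
          ψ ((p : ZMod q) * t ^ 2 + (b : ZMod q) * t) * (q : ℂ) else 0) := by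
      intro t
      by_cases h : 2 * (p : ZMod q) * t = 0
      · rw [if_pos h, if_pos]
        simpa [Finset.mem_insert, Finset.mem_singleton] using (hsol t).mp h
      · rw [if_neg h, if_neg, mul_zero]
        intro hmem
        exact h ((hsol t).mpr (by simpa [Finset.mem_insert, Finset.mem_singleton] using hmem))
    simp_rw [hfilter]
    rw [Finset.sum_ite_mem, Finset.univ_inter, Finset.sum_pair hne]
    rw [hval]
    simp only [mul_zero, zero_mul, add_zero, zero_pow, ne_eq, OfNat.ofNat_ne_zero,
      not_false_eq_true, AddChar.map_zero_eq_one, one_mul]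
    ring
  -- Step 5: conclude
  have hns : Complex.normSq (G p b q) = 2 * q := by
    have := hsum
    rw [Complex.mul_conj] at this
    exact_mod_cast this
  rw [Complex.norm_def, hns]
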